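/- arXiv:2408.00031 — 5 statements merged into one kernel-verified Lean document; each statement's English description precedes it below -/
import Mathlib

section
/- Let $c > -1$, $z_0 = (x_0, y_0) \in \mathbb{R}^{N+1}_+$ and $r > 0$, and let $V(z_0, r) = \int_{B(x_0,r) \times [y_0, y_0 + r)} y^c \, dx \, dy$. Then there exist constants $C_1, C_2 > 0$ depending only on $N$ and $c$ such that $C_1 \, r^{N+1+c} \left(\frac{y_0}{r}\right)^c \left(\frac{y_0}{r} \wedge 1\right)^{-c} \le V(z_0, r) \le C_2 \, r^{N+1+c} \left(\frac{y_0}{r}\right)^c \left(\frac{y_0}{r} \wedge 1\right)^{-c}$ for all $z_0 \in \mathbb{R}^{N+1}_+$ and $r > 0$. -/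
open Real MeasureTheory

/-- The weighted measure of the cylindric ball `Q(z0,r) = B(x0,r) × [y0, y0+r)`
with respect to the measure `y^c dx dy`. -/
noncomputable def cylVol (N : ℕ) (c : ℝ) (z0 : EuclideanSpace ℝ (Fin N) × ℝ) (r : ℝ) : ℝ :=
  ∫ z in (Metric.ball z0.1 r) ×ˢ (Set.Ico z0.2 (z0.2 + r)),
    z.2 ^ c

private lemma J_integrable {c y0 r : ℝ} (hy : 0 < y0) :
    MeasureTheory.IntegrableOn (fun y : ℝ => y ^ c) (Set.Ico y0 (y0 + r)) := by
  have hcont : ContinuousOn (fun y : ℝ => y ^ c) (Set.Icc y0 (y0 + r)) := by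
    apply ContinuousOn.rpow_const continuousOn_id
    intro x hx
    exact Or.inl (ne_of_gt (lt_of_lt_of_le hy hx.1))
  exact hcont.integrableOn_Icc.mono_set Set.Ico_subset_Icc_self

private lemma J_lower {c y0 r : ℝ} (hy : 0 < y0) (hr : 0 < r) :
    (2 : ℝ) ^ (-|c|) / 2 * (r * (max y0 r) ^ c) ≤ ∫ y in Set.Ico y0 (y0 + r), y ^ c := by
  set M := max y0 r with hM
  have hM0 : 0 < M := lt_max_of_lt_right hr
  have hMle : M ≤ y0 + r := max_le (by linarith) (by linarith)
  have hsub : Set.Ico (y0 + r / 2) (y0 + r) ⊆ Set.Ico y0 (y0 + r) :=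
    Set.Ico_subset_Ico (by linarith) le_rfl
  have hnonneg : 0 ≤ᵐ[volume.restrict (Set.Ico y0 (y0 + r))] fun y : ℝ => y ^ c := by
    refine ae_restrict_of_forall_mem measurableSet_Ico fun y hyy => ?_
    exact Real.rpow_nonneg (le_of_lt (lt_of_lt_of_le hy hyy.1)) c
  have h1 : (∫ y in Set.Ico (y0 + r / 2) (y0 + r), y ^ c) ≤ ∫ y in Set.Ico y0 (y0 + r), y ^ c :=
    setIntegral_mono_set (J_integrable hy) hnonneg (HasSubset.Subset.eventuallyLE hsub)
  have hptwise : ∀ y ∈ Set.Ico (y0 + r / 2) (y0 + r),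
      (2 : ℝ) ^ (-|c|) * M ^ c ≤ y ^ c := by
    intro y hyy
    have hy1 : y0 + r / 2 ≤ y := hyy.1
    have hy2 : y < y0 + r := hyy.2
    have hypos : 0 < y := by linarith
    rcases le_or_gt 0 c with hc0 | hc0
    · have habs : |c| = c := abs_of_nonneg hc0
      rw [habs]
      have h2M : M / 2 ≤ y := by
        have : M / 2 ≤ (y0 + r) / 2 := by linarith
        linarith
      calc (2 : ℝ) ^ (-c) * M ^ c = (M / 2) ^ c := by
            rw [Real.div_rpow hM0.le (by norm_num : (0:ℝ) ≤ 2), Real.rpow_neg (by norm_num)]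
            ring
        _ ≤ y ^ c := Real.rpow_le_rpow (by positivity) h2M hc0
    · have habs : |c| = -c := abs_of_neg hc0
      rw [habs, neg_neg]
      have h2M : y ≤ 2 * M := by
        have h1' : y0 ≤ M := le_max_left _ _
        have h2' : r ≤ M := le_max_right _ _
        linarith
      calc (2 : ℝ) ^ c * M ^ c = (2 * M) ^ c := (Real.mul_rpow (by norm_num) hM0.le).symm
        _ ≤ y ^ c := Real.rpow_le_rpow_of_nonpos hypos h2M hc0.le
  have h2 : (∫ _y in Set.Ico (y0 + r / 2) (y0 + r), ((2 : ℝ) ^ (-|c|) * M ^ c)) ≤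
      ∫ y in Set.Ico (y0 + r / 2) (y0 + r), y ^ c := by
    refine setIntegral_mono_on ?_ ?_ measurableSet_Ico hptwise
    · exact integrableOn_const measure_Ico_lt_top.ne
    · exact (J_integrable hy).mono_set hsub
  have h3 : (∫ _y in Set.Ico (y0 + r / 2) (y0 + r), ((2 : ℝ) ^ (-|c|) * M ^ c)) =
      r / 2 * ((2 : ℝ) ^ (-|c|) * M ^ c) := by
    rw [setIntegral_const, measureReal_def, Real.volume_Ico, smul_eq_mul]
    congr 1
    rw [ENNReal.toReal_ofReal (by linarith)]
    ring
  calc (2 : ℝ) ^ (-|c|) / 2 * (r * M ^ c)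
      = r / 2 * ((2 : ℝ) ^ (-|c|) * M ^ c) := by ring
    _ ≤ ∫ y in Set.Ico (y0 + r / 2) (y0 + r), y ^ c := h3 ▸ h2
    _ ≤ _ := h1

private lemma J_upper {c y0 r : ℝ} (hc : -1 < c) (hy : 0 < y0) (hr : 0 < r) :
    (∫ y in Set.Ico y0 (y0 + r), y ^ c) ≤
      ((2 : ℝ) ^ |c| + 2 ^ (c + 1) / (c + 1)) * (r * (max y0 r) ^ c) := by
  set M := max y0 r with hM
  have hM0 : 0 < M := lt_max_of_lt_right hr
  have hc1 : 0 < c + 1 := by linarith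
  have hterm1 : (0:ℝ) ≤ (2 : ℝ) ^ |c| * (r * M ^ c) := by positivity
  have hterm2 : (0:ℝ) ≤ (2 : ℝ) ^ (c + 1) / (c + 1) * (r * M ^ c) := by positivity
  have hvol : (volume (Set.Ico y0 (y0 + r))).toReal = r := by
    rw [Real.volume_Ico, ENNReal.toReal_ofReal (by linarith)]
    ring
  rcases le_or_gt 0 c with hc0 | hc0
  · -- c ≥ 0 : pointwise bound (2M)^c
    have hbound : ∀ y ∈ Set.Ico y0 (y0 + r), ‖y ^ c‖ ≤ (2 * M) ^ c := by
      intro y hyy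
      have hypos : 0 < y := lt_of_lt_of_le hy hyy.1
      have h2M : y ≤ 2 * M := by
        have h1' : y0 ≤ M := le_max_left _ _
        have h2' : r ≤ M := le_max_right _ _
        have := hyy.2
        linarith
      rw [Real.norm_eq_abs, abs_of_nonneg (Real.rpow_nonneg hypos.le c)]
      exact Real.rpow_le_rpow hypos.le h2M hc0
    have := norm_setIntegral_le_of_norm_le_const (μ := volume)
      measure_Ico_lt_top hbound
    rw [measureReal_def, hvol] at this
    have hle : (∫ y in Set.Ico y0 (y0 + r), y ^ c) ≤ (2 * M) ^ c * r :=
      le_trans (le_abs_self _) this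
    have heq : (2 * M) ^ c * r = (2:ℝ) ^ c * (r * M ^ c) := by
      rw [Real.mul_rpow (by norm_num) hM0.le]; ring
    rw [abs_of_nonneg hc0]
    nlinarith [hterm2]
  · have habs : |c| = -c := abs_of_neg hc0
    rcases le_total r y0 with hry | hry
    · -- y0 ≥ r : pointwise bound y0^c
      have hMy : M = y0 := max_eq_left hry
      have hbound : ∀ y ∈ Set.Ico y0 (y0 + r), ‖y ^ c‖ ≤ y0 ^ c := by
        intro y hyy
        have hypos : 0 < y := lt_of_lt_of_le hy hyy.1
        rw [Real.norm_eq_abs, abs_of_nonneg (Real.rpow_nonneg hypos.le c)]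
        exact Real.rpow_le_rpow_of_nonpos hy hyy.1 hc0.le
      have := norm_setIntegral_le_of_norm_le_const (μ := volume)
        measure_Ico_lt_top hbound
      rw [measureReal_def, hvol] at this
      have hle : (∫ y in Set.Ico y0 (y0 + r), y ^ c) ≤ y0 ^ c * r :=
        le_trans (le_abs_self _) this
      have hone : (1:ℝ) ≤ (2:ℝ) ^ |c| := by
        rw [show (1:ℝ) = (2:ℝ) ^ (0:ℝ) by rw [Real.rpow_zero]]
        exact Real.rpow_le_rpow_of_exponent_le one_le_two (abs_nonneg c)
      have htr : (0:ℝ) ≤ r * y0 ^ c := mul_nonneg hr.le (Real.rpow_nonneg hy.le c)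
      have h5 : 1 * (r * y0 ^ c) ≤ (2:ℝ) ^ |c| * (r * y0 ^ c) :=
        mul_le_mul_of_nonneg_right hone htr
      have hdist : ((2:ℝ) ^ |c| + 2 ^ (c + 1) / (c + 1)) * (r * M ^ c) =
          (2:ℝ) ^ |c| * (r * M ^ c) + 2 ^ (c + 1) / (c + 1) * (r * M ^ c) := by ring
      rw [hMy] at hdist hterm2 ⊢
      linarith
    · -- y0 ≤ r : compare with Ico 0 (2r)
      have hMr : M = r := max_eq_right hry
      have hint2 : MeasureTheory.IntegrableOn (fun y : ℝ => y ^ c) (Set.Ico 0 (2 * r)) := by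
        have h := intervalIntegral.intervalIntegrable_rpow' (a := 0) (b := 2 * r) hc
        exact h.1.congr_set_ae MeasureTheory.Ico_ae_eq_Ioc
      have hsub : Set.Ico y0 (y0 + r) ⊆ Set.Ico 0 (2 * r) :=
        Set.Ico_subset_Ico (by linarith) (by linarith)
      have hnonneg : 0 ≤ᵐ[volume.restrict (Set.Ico 0 (2 * r))] fun y : ℝ => y ^ c := by
        refine ae_restrict_of_forall_mem measurableSet_Ico fun y hyy => ?_
        exact Real.rpow_nonneg hyy.1 c
      have h1 : (∫ y in Set.Ico y0 (y0 + r), y ^ c) ≤ ∫ y in Set.Ico 0 (2 * r), y ^ c :=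
        setIntegral_mono_set hint2 hnonneg (HasSubset.Subset.eventuallyLE hsub)
      have h2 : (∫ y in Set.Ico 0 (2 * r), y ^ c) = (2 * r) ^ (c + 1) / (c + 1) := by
        rw [setIntegral_congr_set MeasureTheory.Ico_ae_eq_Ioc,
          ← intervalIntegral.integral_of_le (by linarith : (0:ℝ) ≤ 2 * r),
          integral_rpow (Or.inl hc), Real.zero_rpow (by linarith), sub_zero]
      have h3 : (2 * r) ^ (c + 1) / (c + 1) = (2:ℝ) ^ (c + 1) / (c + 1) * (r * r ^ c) := by
        rw [Real.mul_rpow (by norm_num) hr.le, Real.rpow_add hr, Real.rpow_one]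
        ring
      have h4 : (∫ y in Set.Ico y0 (y0 + r), y ^ c) ≤
          (2:ℝ) ^ (c + 1) / (c + 1) * (r * M ^ c) := by
        rw [hMr]; rw [h2, h3] at h1; exact h1
      nlinarith [hterm1]

theorem cylVol_two_sided_estimate (N : ℕ) (c : ℝ) (hc : -1 < c) :
    ∃ C₁ C₂ : ℝ, 0 < C₁ ∧ 0 < C₂ ∧
      ∀ (z0 : EuclideanSpace ℝ (Fin N) × ℝ), 0 < z0.2 → ∀ r : ℝ, 0 < r →
        C₁ * (r ^ ((N : ℝ) + 1 + c) * (z0.2 / r) ^ c * (min (z0.2 / r) 1) ^ (-c))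
            ≤ cylVol N c z0 r ∧
          cylVol N c z0 r ≤
            C₂ * (r ^ ((N : ℝ) + 1 + c) * (z0.2 / r) ^ c * (min (z0.2 / r) 1) ^ (-c)) := by
  have hc1 : (0:ℝ) < c + 1 := by linarith
  set K := (volume (Metric.ball (0 : EuclideanSpace ℝ (Fin N)) 1)).toReal with hKdef
  have hK : 0 < K := by
    apply ENNReal.toReal_pos
    · exact (Metric.measure_ball_pos volume 0 one_pos).ne'
    · exact measure_ball_lt_top.ne
  refine ⟨K * ((2 : ℝ) ^ (-|c|) / 2), K * ((2 : ℝ) ^ |c| + 2 ^ (c + 1) / (c + 1)),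
    by positivity, by positivity, ?_⟩
  intro z0 hy r hr
  obtain ⟨x0, y0⟩ := z0
  simp only at hy ⊢
  -- the volume of the ball
  have hball : (volume (Metric.ball x0 r)).toReal = r ^ N * K := by
    rw [Measure.addHaar_ball_of_pos volume x0 hr, ENNReal.toReal_mul,
      ENNReal.toReal_ofReal (by positivity), finrank_euclideanSpace_fin]
  -- factorization of cylVol
  have hcyl : cylVol N c (x0, y0) r = (r ^ N * K) * ∫ y in Set.Ico y0 (y0 + r), y ^ c := by
    have : cylVol N c (x0, y0) r =
        ∫ z in (Metric.ball x0 r) ×ˢ (Set.Ico y0 (y0 + r)),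
          (fun _ : EuclideanSpace ℝ (Fin N) => (1:ℝ)) z.1 * (fun y : ℝ => y ^ c) z.2
          ∂((volume : Measure (EuclideanSpace ℝ (Fin N))).prod (volume : Measure ℝ)) := by
      rw [← MeasureTheory.Measure.volume_eq_prod (EuclideanSpace ℝ (Fin N)) ℝ]
      simp [cylVol]
    have h2 := MeasureTheory.setIntegral_prod_mul
      (μ := (volume : Measure (EuclideanSpace ℝ (Fin N)))) (ν := (volume : Measure ℝ))
      (fun _ : EuclideanSpace ℝ (Fin N) => (1:ℝ)) (fun y : ℝ => y ^ c)
      (Metric.ball x0 r) (Set.Ico y0 (y0 + r))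
    rw [this, h2]
    simp only [MeasureTheory.integral_const, smul_eq_mul, mul_one]
    rw [measureReal_def, Measure.restrict_apply_univ, hball]
  -- the right-hand side factor
  have hRHS : r ^ ((N : ℝ) + 1 + c) * (y0 / r) ^ c * (min (y0 / r) 1) ^ (-c) =
      r ^ N * (r * (max y0 r) ^ c) := by
    have hrN : r ^ ((N : ℝ) + 1 + c) = r ^ N * r * r ^ c := by
      rw [show (N : ℝ) + 1 + c = ((N : ℝ) + 1) + c from rfl, Real.rpow_add hr,
        Real.rpow_add hr, Real.rpow_natCast, Real.rpow_one]
    rcases le_total y0 r with h | h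
    · have hmin : min (y0 / r) 1 = y0 / r := min_eq_left ((div_le_one hr).2 h)
      have hmax : max y0 r = r := max_eq_right h
      rw [hmin, hmax, hrN, mul_assoc (r ^ N * r * r ^ c),
        ← Real.rpow_add (div_pos hy hr), add_neg_cancel, Real.rpow_zero]
      ring
    · have hmin : min (y0 / r) 1 = 1 := min_eq_right ((one_le_div hr).2 h)
      have hmax : max y0 r = y0 := max_eq_left h
      rw [hmin, hmax, Real.one_rpow, hrN, mul_one]
      have : r ^ c * (y0 / r) ^ c = y0 ^ c := by
        rw [← Real.mul_rpow hr.le (div_nonneg hy.le hr.le)]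
        congr 1
        field_simp
      calc r ^ N * r * r ^ c * (y0 / r) ^ c = r ^ N * r * (r ^ c * (y0 / r) ^ c) := by ring
        _ = r ^ N * (r * y0 ^ c) := by rw [this]; ring
  have hrNK : (0:ℝ) ≤ r ^ N * K := by positivity
  constructor
  · calc K * ((2 : ℝ) ^ (-|c|) / 2) *
        (r ^ ((N : ℝ) + 1 + c) * (y0 / r) ^ c * (min (y0 / r) 1) ^ (-c))
        = (r ^ N * K) * ((2 : ℝ) ^ (-|c|) / 2 * (r * (max y0 r) ^ c)) := by
          rw [hRHS]; ring
      _ ≤ (r ^ N * K) * ∫ y in Set.Ico y0 (y0 + r), y ^ c :=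
          mul_le_mul_of_nonneg_left (J_lower hy hr) hrNK
      _ = cylVol N c (x0, y0) r := hcyl.symm
  · calc cylVol N c (x0, y0) r = (r ^ N * K) * ∫ y in Set.Ico y0 (y0 + r), y ^ c := hcyl
      _ ≤ (r ^ N * K) * (((2 : ℝ) ^ |c| + 2 ^ (c + 1) / (c + 1)) * (r * (max y0 r) ^ c)) :=
          mul_le_mul_of_nonneg_left (J_upper hc hy hr) hrNK
      _ = K * ((2 : ℝ) ^ |c| + 2 ^ (c + 1) / (c + 1)) *
          (r ^ ((N : ℝ) + 1 + c) * (y0 / r) ^ c * (min (y0 / r) 1) ^ (-c)) := by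
          rw [hRHS]; ring
end

section
/- Let $c > -1$ and define $V(z_0, r) = \int_{B(x_0,r) \times [y_0, y_0+r)} y^c \, dx \, dy$ for $z_0 = (x_0,y_0) \in \mathbb{R}^{N+1}_+$ and $r > 0$. Then there exists $C \ge 1$ such that for all $z_0 \in \mathbb{R}^{N+1}_+$ and all $s, r > 0$, $\frac{V(z_0, s)}{V(z_0, r)} \le C \left(\frac{s}{r}\right)^N \left(1 \vee \frac{s}{r}\right)^{1 + c^+}$, where $c^+ = \max(c, 0)$. -/
open Real MeasureTheory

section aux

variable {c y0 : ℝ}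

lemma intOn (hy : 0 < y0) {a b : ℝ} (ha : y0 ≤ a) :
    IntegrableOn (fun y : ℝ => y ^ c) (Set.Ico a b) := by
  refine (ContinuousOn.integrableOn_Icc ?_).mono_set Set.Ico_subset_Icc_self
  exact continuousOn_id.rpow_const fun x hx =>
    Or.inl (ne_of_gt (lt_of_lt_of_le hy (le_trans ha hx.1)))

lemma const_le_int (hy : 0 < y0) {a b m : ℝ} (ha : y0 ≤ a) (hab : a ≤ b)
    (hm : ∀ y ∈ Set.Ico a b, m ≤ y ^ c) :
    (b - a) * m ≤ ∫ y in Set.Ico a b, y ^ c := by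
  have h := setIntegral_mono_on (f := fun _ : ℝ => m) (g := fun y : ℝ => y ^ c)
    (integrableOn_const (by rw [Real.volume_Ico]; exact ENNReal.ofReal_ne_top))
    (intOn hy ha) measurableSet_Ico hm
  rwa [setIntegral_const, Real.volume_real_Ico_of_le hab, smul_eq_mul] at h

lemma int_le_const (hy : 0 < y0) {a b m : ℝ} (ha : y0 ≤ a) (hab : a ≤ b)
    (hm : ∀ y ∈ Set.Ico a b, y ^ c ≤ m) :
    (∫ y in Set.Ico a b, y ^ c) ≤ (b - a) * m := by
  have h := setIntegral_mono_on (g := fun _ : ℝ => m) (f := fun y : ℝ => y ^ c)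
    (intOn hy ha)
    (integrableOn_const (by rw [Real.volume_Ico]; exact ENNReal.ofReal_ne_top))
    measurableSet_Ico hm
  rwa [setIntegral_const, Real.volume_real_Ico_of_le hab, smul_eq_mul] at h

lemma A_pos (hy : 0 < y0) {r : ℝ} (hr : 0 < r) :
    0 < ∫ y in Set.Ico y0 (y0 + r), y ^ c := by
  have hm : ∀ y ∈ Set.Ico y0 (y0 + r), min (y0 ^ c) ((y0 + r) ^ c) ≤ y ^ c := by
    intro y hy'
    rcases le_or_gt c 0 with h | h
    · exact le_trans (min_le_right _ _)
        (Real.rpow_le_rpow_of_nonpos (lt_of_lt_of_le hy hy'.1) hy'.2.le h)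
    · exact le_trans (min_le_left _ _) (Real.rpow_le_rpow hy.le hy'.1 h.le)
  have h := const_le_int hy (le_refl y0) (by linarith) hm
  have hmin : 0 < min (y0 ^ c) ((y0 + r) ^ c) :=
    lt_min (Real.rpow_pos_of_pos hy c) (Real.rpow_pos_of_pos (by linarith) c)
  nlinarith

lemma A_mono_set (hy : 0 < y0) {a a' b : ℝ} (ha : y0 ≤ a) (haa : a ≤ a') :
    (∫ y in Set.Ico a' b, y ^ c) ≤ ∫ y in Set.Ico a b, y ^ c := by
  refine setIntegral_mono_set (intOn hy ha) ?_ ?_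
  · filter_upwards [ae_restrict_mem measurableSet_Ico] with y hy'
    exact (Real.rpow_pos_of_pos (lt_of_lt_of_le hy (le_trans ha hy'.1)) c).le
  · exact Filter.Eventually.of_forall (Set.Ico_subset_Ico haa le_rfl)

/-- Key analytic estimate. -/
lemma key (hy : 0 < y0) {r s : ℝ} (hr : 0 < r) (hs : 0 < s) :
    (∫ y in Set.Ico y0 (y0 + s), y ^ c) ≤
      2 ^ (1 + max c 0) * (max 1 (s / r)) ^ (1 + max c 0) *
        ∫ y in Set.Ico y0 (y0 + r), y ^ c := by
  have hAr := (A_pos (c := c) hy hr)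
  have hAs := (A_pos (c := c) hy hs)
  have h2p : (1 : ℝ) ≤ 2 ^ (1 + max c 0) := by
    rw [show (1:ℝ) = 2 ^ (0:ℝ) by simp]
    exact Real.rpow_le_rpow_of_exponent_le one_le_two (by positivity)
  have hMp : (1 : ℝ) ≤ (max 1 (s / r)) ^ (1 + max c 0) :=
    Real.one_le_rpow (le_max_left _ _) (by positivity)
  rcases le_or_gt s r with hsr | hrs
  · calc (∫ y in Set.Ico y0 (y0 + s), y ^ c)
        ≤ ∫ y in Set.Ico y0 (y0 + r), y ^ c := by
          refine setIntegral_mono_set (intOn hy le_rfl) ?_ ?_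
          · filter_upwards [ae_restrict_mem measurableSet_Ico] with y hy'
            exact (Real.rpow_pos_of_pos (lt_of_lt_of_le hy hy'.1) c).le
          · exact Filter.Eventually.of_forall (Set.Ico_subset_Ico le_rfl (by linarith))
      _ ≤ _ := by nlinarith [mul_le_mul h2p hMp zero_le_one (le_trans zero_le_one h2p)]
  · have hk1 : (1 : ℝ) ≤ s / r := (one_le_div hr).2 hrs.le
    rw [max_eq_right hk1]
    rcases le_or_gt c 0 with hcn | hcp
    · -- case `c ≤ 0`
      rw [max_eq_right hcn]
      have hb : (0:ℝ) < (y0 + r) ^ c := Real.rpow_pos_of_pos (by linarith) c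
      have hsplit : (∫ y in Set.Ico y0 (y0 + s), y ^ c) =
          (∫ y in Set.Ico y0 (y0 + r), y ^ c) +
            ∫ y in Set.Ico (y0 + r) (y0 + s), y ^ c := by
        rw [← Set.Ico_union_Ico_eq_Ico (by linarith : y0 ≤ y0 + r) (by linarith : y0 + r ≤ y0 + s)]
        exact setIntegral_union (Set.Ico_disjoint_Ico_same) measurableSet_Ico
          (intOn hy le_rfl) (intOn hy (by linarith))
      have hB : (∫ y in Set.Ico (y0 + r) (y0 + s), y ^ c) ≤
          ((y0 + s) - (y0 + r)) * (y0 + r) ^ c := by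
        refine int_le_const hy (by linarith) (by linarith) fun y hy' => ?_
        exact Real.rpow_le_rpow_of_nonpos (by linarith) hy'.1 hcn
      have hlow : ((y0 + r) - y0) * (y0 + r) ^ c ≤ ∫ y in Set.Ico y0 (y0 + r), y ^ c := by
        refine const_le_int hy le_rfl (by linarith) fun y hy' => ?_
        exact Real.rpow_le_rpow_of_nonpos (lt_of_lt_of_le hy hy'.1) hy'.2.le hcn
      have h1 : (∫ y in Set.Ico y0 (y0 + s), y ^ c) ≤
          (s / r) * ∫ y in Set.Ico y0 (y0 + r), y ^ c := by
        rw [hsplit, div_mul_eq_mul_div, le_div_iff₀ hr]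
        nlinarith
      have hfin : (s / r) * (∫ y in Set.Ico y0 (y0 + r), y ^ c) ≤
          2 ^ ((1:ℝ) + 0) * (s / r) ^ ((1:ℝ) + 0) * ∫ y in Set.Ico y0 (y0 + r), y ^ c := by
        rw [add_zero, Real.rpow_one, Real.rpow_one]
        nlinarith
      exact h1.trans hfin
    · -- case `0 < c`
      rw [max_eq_left hcp.le]
      have hups : (∫ y in Set.Ico y0 (y0 + s), y ^ c) ≤ ((y0 + s) - y0) * (y0 + s) ^ c := by
        refine int_le_const hy le_rfl (by linarith) fun y hy' => ?_
        exact Real.rpow_le_rpow (by linarith [hy'.1]) hy'.2.le hcp.le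
      have hss : y0 + s ≤ (s / r) * (y0 + r) := by
        have hsrr : (s / r) * r = s := div_mul_cancel₀ s hr.ne'
        nlinarith
      have h2 : (y0 + s) ^ c ≤ (s / r) ^ c * (y0 + r) ^ c := by
        calc (y0 + s) ^ c ≤ ((s / r) * (y0 + r)) ^ c :=
              Real.rpow_le_rpow (by linarith) hss hcp.le
          _ = (s / r) ^ c * (y0 + r) ^ c := Real.mul_rpow (by positivity) (by positivity)
      have h4 : (y0 + r) ^ c ≤ 2 ^ c * (y0 + r / 2) ^ c := by
        calc (y0 + r) ^ c ≤ (2 * (y0 + r / 2)) ^ c :=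
              Real.rpow_le_rpow (by linarith) (by linarith) hcp.le
          _ = 2 ^ c * (y0 + r / 2) ^ c := Real.mul_rpow (by norm_num) (by positivity)
      have h3 : ((y0 + r) - (y0 + r / 2)) * (y0 + r / 2) ^ c ≤
          ∫ y in Set.Ico y0 (y0 + r), y ^ c := by
        refine le_trans ?_ (A_mono_set hy le_rfl (by linarith : y0 ≤ y0 + r / 2))
        refine const_le_int hy (by linarith) (by linarith) fun y hy' => ?_
        exact Real.rpow_le_rpow (by linarith) hy'.1 hcp.le
      have e2 : (y0 + r / 2) ^ c ≤ (2 / r) * ∫ y in Set.Ico y0 (y0 + r), y ^ c := by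
        rw [div_mul_eq_mul_div, le_div_iff₀ hr]
        nlinarith
      have hc2 : (0:ℝ) ≤ (s / r) ^ c := by positivity
      have hc3 : (0:ℝ) ≤ 2 ^ (c:ℝ) := by positivity
      calc (∫ y in Set.Ico y0 (y0 + s), y ^ c)
          ≤ ((y0 + s) - y0) * (y0 + s) ^ c := hups
        _ = s * (y0 + s) ^ c := by ring_nf
        _ ≤ s * ((s / r) ^ c * (y0 + r) ^ c) := mul_le_mul_of_nonneg_left h2 hs.le
        _ ≤ s * ((s / r) ^ c * (2 ^ c * (y0 + r / 2) ^ c)) := by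
            refine mul_le_mul_of_nonneg_left (mul_le_mul_of_nonneg_left h4 hc2) hs.le
        _ ≤ s * ((s / r) ^ c * (2 ^ c * ((2 / r) * ∫ y in Set.Ico y0 (y0 + r), y ^ c))) := by
            refine mul_le_mul_of_nonneg_left
              (mul_le_mul_of_nonneg_left (mul_le_mul_of_nonneg_left e2 hc3) hc2) hs.le
        _ = 2 ^ ((1:ℝ) + c) * (s / r) ^ ((1:ℝ) + c) * ∫ y in Set.Ico y0 (y0 + r), y ^ c := by
            rw [Real.rpow_add two_pos, Real.rpow_add (by positivity : (0:ℝ) < s / r),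
              Real.rpow_one, Real.rpow_one]
            field_simp

end aux

lemma cylVol_eq (N : ℕ) (c : ℝ) (z0 : EuclideanSpace ℝ (Fin N) × ℝ) (r : ℝ) :
    cylVol N c z0 r =
      (volume (Metric.ball z0.1 r)).toReal * ∫ y in Set.Ico z0.2 (z0.2 + r), y ^ c := by
  rw [cylVol, MeasureTheory.Measure.volume_eq_prod]
  trans (∫ _ in Metric.ball z0.1 r, (1:ℝ)) * ∫ y in Set.Ico z0.2 (z0.2 + r), y ^ c
  · rw [← setIntegral_prod_mul (fun _ : EuclideanSpace ℝ (Fin N) => (1:ℝ))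
      (fun y : ℝ => y ^ c)]
    simp
  · rw [setIntegral_const, smul_eq_mul, mul_one, measureReal_def]

theorem cylVol_doubling_general (N : ℕ) (c : ℝ) (hc : -1 < c) :
    ∃ C : ℝ, 1 ≤ C ∧
      ∀ (z0 : EuclideanSpace ℝ (Fin N) × ℝ), 0 < z0.2 → ∀ s r : ℝ, 0 < s → 0 < r →
        cylVol N c z0 s / cylVol N c z0 r ≤
          C * (s / r) ^ (N : ℝ) * (max 1 (s / r)) ^ (1 + max c 0) := by
  refine ⟨2 ^ (1 + max c 0), ?_, ?_⟩
  · rw [show (1:ℝ) = 2 ^ (0:ℝ) by simp]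
    exact Real.rpow_le_rpow_of_exponent_le one_le_two (by positivity)
  intro z0 hz0 s r hs hr
  set uB : ℝ := (volume (Metric.ball (0 : EuclideanSpace ℝ (Fin N)) 1)).toReal with huB
  have hball : ∀ (x : EuclideanSpace ℝ (Fin N)) (t : ℝ), 0 < t →
      (volume (Metric.ball x t)).toReal = t ^ N * uB := by
    intro x t ht
    rw [Measure.addHaar_ball_of_pos volume x ht, ENNReal.toReal_mul,
      ENNReal.toReal_ofReal (by positivity), finrank_euclideanSpace_fin]
  have hupos : 0 < uB :=
    ENNReal.toReal_pos (Metric.measure_ball_pos volume _ one_pos).ne' measure_ball_lt_top.ne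
  have hAr := A_pos (c := c) hz0 hr
  have hkey := key (c := c) hz0 hr hs
  rw [cylVol_eq, cylVol_eq, hball _ s hs, hball _ r hr, Real.rpow_natCast]
  have hrn : (0:ℝ) < r ^ N := pow_pos hr N
  have hsn : (0:ℝ) < s ^ N := pow_pos hs N
  rw [div_le_iff₀ (by positivity)]
  have heq : 2 ^ (1 + max c 0) * (s / r) ^ N * (max 1 (s / r)) ^ (1 + max c 0) *
        (r ^ N * uB * ∫ y in Set.Ico z0.2 (z0.2 + r), y ^ c) =
      s ^ N * uB * (2 ^ (1 + max c 0) * (max 1 (s / r)) ^ (1 + max c 0) *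
        ∫ y in Set.Ico z0.2 (z0.2 + r), y ^ c) := by
    rw [div_pow]
    field_simp
  rw [heq]
  exact mul_le_mul_of_nonneg_left hkey (by positivity)
end

section
/- Let $c > -1$ and $V(z_0, r) = \int_{B(x_0,r) \times [y_0,y_0+r)} y^c \, dx \, dy$. Then there exists a constant $C > 0$ such that $V(z_0, 2r) \le C \, V(z_0, r)$ for all $z_0 \in \mathbb{R}^{N+1}_+$ and $r > 0$ (doubling property). -/
open Real MeasureTheory

lemma oneD_doubling (c : ℝ) {y0 r : ℝ} (hy : 0 < y0) (hr : 0 < r) :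
    (∫ y in Set.Ico y0 (y0 + 2 * r), y ^ c) ≤
      (2 * max 1 (2 ^ c)) * ∫ y in Set.Ico y0 (y0 + r), y ^ c := by
  have h1 : ∀ a b : ℝ, a ≤ b → (∫ y in Set.Ico a b, y ^ c) = ∫ y in a..b, y ^ c := by
    intro a b hab
    rw [intervalIntegral.integral_of_le hab, MeasureTheory.integral_Ico_eq_integral_Ioo,
        MeasureTheory.integral_Ioc_eq_integral_Ioo]
  rw [h1 _ _ (by linarith), h1 _ _ (by linarith)]
  have key := intervalIntegral.smul_integral_comp_mul_add (a := y0) (b := y0 + r)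
    (f := fun y : ℝ => y ^ c) 2 (-y0)
  rw [show 2 * y0 + -y0 = y0 from by ring,
      show 2 * (y0 + r) + -y0 = y0 + 2 * r from by ring] at key
  rw [← key]
  have hcont1 : ContinuousOn (fun u : ℝ => (2 * u + -y0) ^ c) (Set.uIcc y0 (y0 + r)) := by
    apply ContinuousOn.rpow_const
    · exact ((continuous_const.mul continuous_id).add continuous_const).continuousOn
    · intro x hx
      rw [Set.uIcc_of_le (by linarith)] at hx
      left
      have : y0 ≤ x := hx.1
      exact ne_of_gt (by linarith)
  have hcont2 : ContinuousOn (fun u : ℝ => max 1 (2 ^ c) * u ^ c) (Set.uIcc y0 (y0 + r)) := by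
    apply ContinuousOn.mul continuousOn_const
    apply ContinuousOn.rpow_const continuousOn_id
    intro x hx
    rw [Set.uIcc_of_le (by linarith)] at hx
    left
    have : y0 ≤ x := hx.1
    exact ne_of_gt (by simp only [id_eq]; linarith)
  have hmono : (∫ u in y0..y0 + r, (2 * u + -y0) ^ c) ≤
      ∫ u in y0..y0 + r, max 1 (2 ^ c) * u ^ c := by
    apply intervalIntegral.integral_mono_on (by linarith)
      (hcont1.intervalIntegrable) (hcont2.intervalIntegrable)
    intro u hu
    have hu0 : 0 < u := lt_of_lt_of_le hy hu.1
    have h1u : u ≤ 2 * u + -y0 := by have := hu.1; linarith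
    rcases le_or_gt 0 c with hc0 | hc0
    · calc (2 * u + -y0) ^ c ≤ (2 * u) ^ c :=
            Real.rpow_le_rpow (by linarith) (by linarith) hc0
        _ = 2 ^ c * u ^ c := Real.mul_rpow (by norm_num) hu0.le
        _ ≤ max 1 (2 ^ c) * u ^ c :=
            mul_le_mul_of_nonneg_right (le_max_right _ _) (Real.rpow_nonneg hu0.le c)
    · calc (2 * u + -y0) ^ c ≤ u ^ c :=
            Real.rpow_le_rpow_of_nonpos hu0 h1u hc0.le
        _ = 1 * u ^ c := (one_mul _).symm
        _ ≤ max 1 (2 ^ c) * u ^ c :=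
            mul_le_mul_of_nonneg_right (le_max_left _ _) (Real.rpow_nonneg hu0.le c)
  calc (2 : ℝ) • ∫ u in y0..y0 + r, (2 * u + -y0) ^ c
      ≤ 2 * ∫ u in y0..y0 + r, max 1 (2 ^ c) * u ^ c := by
        rw [smul_eq_mul]
        exact mul_le_mul_of_nonneg_left hmono (by norm_num)
    _ = (2 * max 1 (2 ^ c)) * ∫ y in y0..y0 + r, y ^ c := by
        rw [intervalIntegral.integral_const_mul]; ring

theorem cylVol_doubling (N : ℕ) (c : ℝ) (hc : -1 < c) :
    ∃ C : ℝ, 0 < C ∧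
      ∀ (z0 : EuclideanSpace ℝ (Fin N) × ℝ), 0 < z0.2 → ∀ r : ℝ, 0 < r →
        cylVol N c z0 (2 * r) ≤ C * cylVol N c z0 r := by
  refine ⟨2 ^ N * (2 * max 1 (2 ^ c)), by positivity, ?_⟩
  intro z0 hy r hr
  rw [cylVol_eq, cylVol_eq]
  have ball2 : (volume (Metric.ball z0.1 (2 * r))).toReal =
      2 ^ N * (volume (Metric.ball z0.1 r)).toReal := by
    rw [Measure.addHaar_ball_of_pos _ _ (by linarith : (0:ℝ) < 2 * r),
        Measure.addHaar_ball_of_pos _ _ hr]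
    rw [ENNReal.toReal_mul, ENNReal.toReal_mul,
        ENNReal.toReal_ofReal (by positivity), ENNReal.toReal_ofReal (by positivity)]
    rw [finrank_euclideanSpace_fin, mul_pow]
    ring
  rw [ball2]
  have := oneD_doubling c hy hr
  have hvol : (0:ℝ) ≤ (volume (Metric.ball z0.1 r)).toReal := ENNReal.toReal_nonneg
  calc 2 ^ N * (volume (Metric.ball z0.1 r)).toReal * ∫ y in Set.Ico z0.2 (z0.2 + 2 * r), y ^ c
      ≤ 2 ^ N * (volume (Metric.ball z0.1 r)).toReal *
          ((2 * max 1 (2 ^ c)) * ∫ y in Set.Ico z0.2 (z0.2 + r), y ^ c) := by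
        apply mul_le_mul_of_nonneg_left this (by positivity)
    _ = 2 ^ N * (2 * max 1 (2 ^ c)) *
          ((volume (Metric.ball z0.1 r)).toReal * ∫ y in Set.Ico z0.2 (z0.2 + r), y ^ c) := by
        ring
end

section
/- Let $c \in \mathbb{R}$, $C, k > 0$. Then there exist constants $C', k' > 0$ such that for all $t > 0$ and all $z_1 = (x_1,y_1), z_2 = (x_2,y_2) \in \mathbb{R}^{N+1}_+$: $C\, t^{-(N+1)/2} y_1^{-c/2}\left(1 \wedge \frac{y_1}{\sqrt{t}}\right)^{c/2} y_2^{-c/2}\left(1 \wedge \frac{y_2}{\sqrt{t}}\right)^{c/2} \exp\left(-\frac{|z_1 - z_2|^2}{k t}\right) \le C'\, t^{-(N+1)/2} y_2^{-c} \left(1 \wedge \frac{y_2}{\sqrt{t}}\right)^{c} \exp\left(-\frac{|z_1 - z_2|^2}{k' t}\right)$. -/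
open Real

private lemma kernel_aux_key {y s : ℝ} (hy : 0 < y) (hs : 0 < s) (e : ℝ) :
    y ^ (-e) * (min 1 (y / s)) ^ e = (max y s) ^ (-e) := by
  have hmax : 0 < max y s := lt_max_of_lt_left hy
  have hmin : min 1 (y / s) = (max y s)⁻¹ * y := by
    rcases le_total y s with h | h
    · rw [max_eq_right h, min_eq_right (by rw [div_le_one hs]; exact h), inv_mul_eq_div]
    · rw [max_eq_left h, min_eq_left ((one_le_div hs).mpr h), inv_mul_cancel₀ hy.ne']
  calc y ^ (-e) * (min 1 (y / s)) ^ e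
      = y ^ (-e) * ((max y s)⁻¹ ^ e * y ^ e) := by
        rw [hmin, Real.mul_rpow (by positivity) hy.le]
    _ = (max y s) ^ (-e) * (y ^ (-e) * y ^ e) := by
        rw [Real.inv_rpow hmax.le, ← Real.rpow_neg hmax.le]; ring
    _ = (max y s) ^ (-e) := by
        rw [← Real.rpow_add hy, neg_add_cancel, Real.rpow_zero, mul_one]

theorem symmetric_to_onesided_kernel_bound (N : ℕ) (c C k : ℝ) (hC : 0 < C) (hk : 0 < k) :
    ∃ C' k' : ℝ, 0 < C' ∧ 0 < k' ∧
      ∀ t : ℝ, 0 < t →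
        ∀ z₁ z₂ : EuclideanSpace ℝ (Fin N) × ℝ, 0 < z₁.2 → 0 < z₂.2 →
          C * t ^ (-((N : ℝ) + 1) / 2) *
              (z₁.2 ^ (-c / 2) * (min 1 (z₁.2 / Real.sqrt t)) ^ (c / 2)) *
              (z₂.2 ^ (-c / 2) * (min 1 (z₂.2 / Real.sqrt t)) ^ (c / 2)) *
              Real.exp (-(‖z₁.1 - z₂.1‖ ^ 2 + (z₁.2 - z₂.2) ^ 2) / (k * t)) ≤
            C' * t ^ (-((N : ℝ) + 1) / 2) *
              (z₂.2 ^ (-c) * (min 1 (z₂.2 / Real.sqrt t)) ^ c) *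
              Real.exp (-(‖z₁.1 - z₂.1‖ ^ 2 + (z₁.2 - z₂.2) ^ 2) / (k' * t)) := by
  refine ⟨C * Real.exp (c ^ 2 * k / 8), 2 * k, by positivity, by positivity, ?_⟩
  intro t ht z₁ z₂ hy₁ hy₂
  set s := Real.sqrt t with hsdef
  have hs : 0 < s := Real.sqrt_pos.mpr ht
  have hst : s ^ 2 = t := Real.sq_sqrt ht.le
  set y₁ := z₁.2
  set y₂ := z₂.2
  set D : ℝ := ‖z₁.1 - z₂.1‖ ^ 2 + (y₁ - y₂) ^ 2 with hD
  have hD0 : 0 ≤ D := by positivity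
  have hDy : (y₁ - y₂) ^ 2 ≤ D := le_add_of_nonneg_left (by positivity)
  have h1 : y₁ ^ (-c / 2) * (min 1 (y₁ / s)) ^ (c / 2) = (max y₁ s) ^ (-(c / 2)) := by
    rw [neg_div]; exact kernel_aux_key hy₁ hs _
  have h2 : y₂ ^ (-c / 2) * (min 1 (y₂ / s)) ^ (c / 2) = (max y₂ s) ^ (-(c / 2)) := by
    rw [neg_div]; exact kernel_aux_key hy₂ hs _
  have h3 : y₂ ^ (-c) * (min 1 (y₂ / s)) ^ c = (max y₂ s) ^ (-c) := kernel_aux_key hy₂ hs _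
  rw [h1, h2, h3]
  set M₁ := max y₁ s with hM₁
  set M₂ := max y₂ s with hM₂
  have hM₁0 : 0 < M₁ := lt_max_of_lt_right hs
  have hM₂0 : 0 < M₂ := lt_max_of_lt_right hs
  set u : ℝ := |y₁ - y₂| / s with hu
  have hu0 : 0 ≤ u := by positivity
  -- ratio bounds
  have hr1 : M₂ ≤ M₁ * (1 + u) := by
    have hle : M₂ ≤ M₁ + |y₁ - y₂| := by
      rw [hM₂, hM₁]
      rcases le_total y₂ s with h | h
      · calc max y₂ s = s := max_eq_right h
          _ ≤ max y₁ s + |y₁ - y₂| := le_add_of_le_of_nonneg (le_max_right _ _) (abs_nonneg _)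
      · calc max y₂ s = y₂ := max_eq_left h
          _ ≤ y₁ + |y₁ - y₂| := by
              have h' := le_abs_self (y₂ - y₁)
              rw [abs_sub_comm] at h'
              linarith
          _ ≤ max y₁ s + |y₁ - y₂| := by gcongr; exact le_max_left _ _
    have h1s : 1 ≤ M₁ / s := (one_le_div hs).mpr (le_max_right _ _)
    have habs : |y₁ - y₂| ≤ M₁ * u := by
      calc |y₁ - y₂| = 1 * |y₁ - y₂| := (one_mul _).symm
        _ ≤ (M₁ / s) * |y₁ - y₂| := mul_le_mul_of_nonneg_right h1s (abs_nonneg _)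
        _ = M₁ * u := by rw [hu]; ring
    rw [mul_add, mul_one]
    linarith
  have hr2 : M₁ ≤ M₂ * (1 + u) := by
    have hle : M₁ ≤ M₂ + |y₁ - y₂| := by
      rw [hM₂, hM₁]
      rcases le_total y₁ s with h | h
      · calc max y₁ s = s := max_eq_right h
          _ ≤ max y₂ s + |y₁ - y₂| := le_add_of_le_of_nonneg (le_max_right _ _) (abs_nonneg _)
      · calc max y₁ s = y₁ := max_eq_left h
          _ ≤ y₂ + |y₁ - y₂| := by
              have h' := le_abs_self (y₁ - y₂)
              linarith
          _ ≤ max y₂ s + |y₁ - y₂| := by gcongr; exact le_max_left _ _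
    have h1s : 1 ≤ M₂ / s := (one_le_div hs).mpr (le_max_right _ _)
    have habs : |y₁ - y₂| ≤ M₂ * u := by
      calc |y₁ - y₂| = 1 * |y₁ - y₂| := (one_mul _).symm
        _ ≤ (M₂ / s) * |y₁ - y₂| := mul_le_mul_of_nonneg_right h1s (abs_nonneg _)
        _ = M₂ * u := by rw [hu]; ring
    rw [mul_add, mul_one]
    linarith
  set α : ℝ := |c| / 2 with hα
  have hα0 : 0 ≤ α := by positivity
  have hu1 : (0:ℝ) < 1 + u := by linarith
  -- key comparison of powers
  have hpow : M₁ ^ (-(c / 2)) ≤ M₂ ^ (-(c / 2)) * (1 + u) ^ α := by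
    rcases le_or_gt 0 c with hc | hc
    · have habs : α = c / 2 := by rw [hα, abs_of_nonneg hc]
      rw [habs]
      have h2' : M₂ ^ (c / 2) ≤ M₁ ^ (c / 2) * (1 + u) ^ (c / 2) := by
        rw [← Real.mul_rpow hM₁0.le hu1.le]
        exact Real.rpow_le_rpow hM₂0.le hr1 (by linarith)
      have ha : 0 < M₁ ^ (c / 2) := Real.rpow_pos_of_pos hM₁0 _
      have hb : 0 < M₂ ^ (c / 2) := Real.rpow_pos_of_pos hM₂0 _
      rw [Real.rpow_neg hM₁0.le, Real.rpow_neg hM₂0.le, inv_eq_one_div, inv_eq_one_div,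
        one_div_mul_eq_div, div_le_div_iff₀ ha hb]
      nlinarith [h2']
    · have habs : α = -(c / 2) := by rw [hα, abs_of_neg hc]; ring
      rw [habs]
      have := Real.rpow_le_rpow hM₁0.le hr2 (by linarith : (0:ℝ) ≤ -(c/2))
      rwa [Real.mul_rpow hM₂0.le hu1.le] at this
  -- (1+u)^α ≤ exp (α u)
  have hexp1 : (1 + u) ^ α ≤ Real.exp (α * u) := by
    have h1u : (1 : ℝ) + u ≤ Real.exp u := by
      have := Real.add_one_le_exp u; linarith
    calc (1 + u) ^ α ≤ (Real.exp u) ^ α :=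
          Real.rpow_le_rpow hu1.le h1u hα0
      _ = Real.exp (α * u) := by
          rw [Real.rpow_def_of_pos (Real.exp_pos u), Real.log_exp, mul_comm]
  -- gaussian absorbs
  have hu2 : u ^ 2 = (y₁ - y₂) ^ 2 / t := by
    rw [hu, div_pow, sq_abs, hst]
  have hgauss : Real.exp (-D / (2 * k * t)) ≤ Real.exp (-(u ^ 2) / (2 * k)) := by
    apply Real.exp_le_exp.mpr
    rw [hu2, ← neg_div, div_div, show t * (2 * k) = 2 * k * t by ring,
      div_le_div_iff_of_pos_right (by positivity)]
    linarith [hDy]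
  have hquad : Real.exp (α * u) * Real.exp (-(u ^ 2) / (2 * k)) ≤ Real.exp (c ^ 2 * k / 8) := by
    rw [← Real.exp_add]
    apply Real.exp_le_exp.mpr
    have hαc : α ^ 2 = c ^ 2 / 4 := by rw [hα, div_pow, sq_abs]; norm_num
    have hstep : α * u + -(u ^ 2) / (2 * k) ≤ α ^ 2 * k / 2 := by
      rw [← sub_nonneg, show α ^ 2 * k / 2 - (α * u + -(u ^ 2) / (2 * k)) =
        (u - α * k) ^ 2 / (2 * k) by field_simp; ring]
      positivity
    calc α * u + -(u ^ 2) / (2 * k) ≤ α ^ 2 * k / 2 := hstep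
      _ = c ^ 2 * k / 8 := by rw [hαc]; ring
  -- main core inequality
  have main : M₁ ^ (-(c / 2)) * Real.exp (-D / (k * t)) ≤
      Real.exp (c ^ 2 * k / 8) * M₂ ^ (-(c / 2)) * Real.exp (-D / (2 * k * t)) := by
    have hsplit : Real.exp (-D / (k * t)) =
        Real.exp (-D / (2 * k * t)) * Real.exp (-D / (2 * k * t)) := by
      rw [← Real.exp_add]
      congr 1
      field_simp
      ring
    rw [hsplit]
    have hM2p : 0 ≤ M₂ ^ (-(c / 2)) := (Real.rpow_pos_of_pos hM₂0 _).le
    calc M₁ ^ (-(c / 2)) * (Real.exp (-D / (2 * k * t)) * Real.exp (-D / (2 * k * t)))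
        ≤ (M₂ ^ (-(c / 2)) * (1 + u) ^ α) *
            (Real.exp (-D / (2 * k * t)) * Real.exp (-D / (2 * k * t))) := by
          gcongr
      _ ≤ (M₂ ^ (-(c / 2)) * Real.exp (α * u)) *
            (Real.exp (-D / (2 * k * t)) * Real.exp (-(u ^ 2) / (2 * k))) := by
          gcongr
      _ = (M₂ ^ (-(c / 2)) * Real.exp (-D / (2 * k * t))) *
            (Real.exp (α * u) * Real.exp (-(u ^ 2) / (2 * k))) := by ring
      _ ≤ (M₂ ^ (-(c / 2)) * Real.exp (-D / (2 * k * t))) * Real.exp (c ^ 2 * k / 8) := by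
          gcongr
      _ = Real.exp (c ^ 2 * k / 8) * M₂ ^ (-(c / 2)) * Real.exp (-D / (2 * k * t)) := by ring
  -- assemble
  have hsplitM : M₂ ^ (-c) = M₂ ^ (-(c / 2)) * M₂ ^ (-(c / 2)) := by
    rw [← Real.rpow_add hM₂0]
    congr 1
    ring
  calc C * t ^ (-((N : ℝ) + 1) / 2) * M₁ ^ (-(c / 2)) * M₂ ^ (-(c / 2)) *
        Real.exp (-D / (k * t))
      = (C * t ^ (-((N : ℝ) + 1) / 2) * M₂ ^ (-(c / 2))) *
          (M₁ ^ (-(c / 2)) * Real.exp (-D / (k * t))) := by ring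
    _ ≤ (C * t ^ (-((N : ℝ) + 1) / 2) * M₂ ^ (-(c / 2))) *
          (Real.exp (c ^ 2 * k / 8) * M₂ ^ (-(c / 2)) * Real.exp (-D / (2 * k * t))) := by
        have hpos : 0 ≤ C * t ^ (-((N : ℝ) + 1) / 2) * M₂ ^ (-(c / 2)) := by positivity
        exact mul_le_mul_of_nonneg_left main hpos
    _ = C * Real.exp (c ^ 2 * k / 8) * t ^ (-((N : ℝ) + 1) / 2) * M₂ ^ (-c) *
          Real.exp (-D / (2 * k * t)) := by
        rw [hsplitM]; ring
end

section
/- Let $c > -1$ and $t > 0$. Then $\int_{\mathbb{R}^{N+1}_+} t^{-(N+1)/2} \left(1 \wedge \frac{y}{\sqrt{t}}\right)^{c} \exp\left(-\frac{|z - z_0|^2}{\kappa t}\right) y^{-c} \cdot y^c \, dz < \infty$ for every $z_0 \in \mathbb{R}^{N+1}_+$ and $\kappa > 0$; moreover this integral is bounded uniformly in $z_0$ and $t$, i.e. there is $C = C(N, c, \kappa)$ with $\int_{\mathbb{R}^{N+1}_+} t^{-(N+1)/2} \left(1 \wedge \frac{y}{\sqrt{t}}\right)^{c} \exp\left(-\frac{|z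 - z_0|^2}{\kappa t}\right) dz \le C$ for all $t > 0$ and $z_0 \in \mathbb{R}^{N+1}_+$. -/
open Real MeasureTheory

lemma lintegral_gaussE (N : ℕ) {b : ℝ} (hb : 0 < b) (w : EuclideanSpace ℝ (Fin N)) :
    ∫⁻ x : EuclideanSpace ℝ (Fin N), ENNReal.ofReal (Real.exp (-b * ‖x - w‖ ^ 2)) =
      ENNReal.ofReal ((π / b) ^ ((N : ℝ) / 2)) := by
  have hi : Integrable (fun v : EuclideanSpace ℝ (Fin N) => rexp (-b * ‖v‖ ^ 2)) := by
    have := (GaussianFourier.integrable_cexp_neg_mul_sq_norm_add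
      (V := EuclideanSpace ℝ (Fin N)) (b := (b : ℂ)) (by simpa) 0 0).norm
    simpa [Complex.norm_exp, ← Complex.ofReal_pow] using this
  calc ∫⁻ x : EuclideanSpace ℝ (Fin N), ENNReal.ofReal (Real.exp (-b * ‖x - w‖ ^ 2))
      = ∫⁻ x : EuclideanSpace ℝ (Fin N),
          (fun x => ENNReal.ofReal (Real.exp (-b * ‖x‖ ^ 2))) (x - w) := rfl
    _ = ∫⁻ x : EuclideanSpace ℝ (Fin N), ENNReal.ofReal (Real.exp (-b * ‖x‖ ^ 2)) :=
        lintegral_sub_right_eq_self (μ := volume)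
          (fun x => ENNReal.ofReal (Real.exp (-b * ‖x‖ ^ 2))) w
    _ = ENNReal.ofReal ((π / b) ^ ((N : ℝ) / 2)) := by
        rw [← ofReal_integral_eq_lintegral_ofReal hi
          (Filter.Eventually.of_forall fun x => (Real.exp_pos _).le)]
        congr 1
        rw [GaussianFourier.integral_rexp_neg_mul_sq_norm hb]
        simp

lemma lintegral_gauss1 {b : ℝ} (hb : 0 < b) (w : ℝ) :
    ∫⁻ y : ℝ, ENNReal.ofReal (Real.exp (-b * (y - w) ^ 2)) =
      ENNReal.ofReal (Real.sqrt (π / b)) := by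
  calc ∫⁻ y : ℝ, ENNReal.ofReal (Real.exp (-b * (y - w) ^ 2))
      = ∫⁻ y : ℝ, (fun y => ENNReal.ofReal (Real.exp (-b * y ^ 2))) (y - w) := rfl
    _ = ∫⁻ y : ℝ, ENNReal.ofReal (Real.exp (-b * y ^ 2)) :=
        lintegral_sub_right_eq_self (μ := volume)
          (fun y => ENNReal.ofReal (Real.exp (-b * y ^ 2))) w
    _ = ENNReal.ofReal (Real.sqrt (π / b)) := by
        rw [← ofReal_integral_eq_lintegral_ofReal (integrable_exp_neg_mul_sq hb)
          (Filter.Eventually.of_forall fun x => (Real.exp_pos _).le), integral_gaussian]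

theorem kernel_bound_uniformly_integrable (N : ℕ) (c κ : ℝ) (hc : -1 < c) (hκ : 0 < κ) :
    ∃ C : ℝ, 0 < C ∧
      ∀ t : ℝ, 0 < t → ∀ z₀ : EuclideanSpace ℝ (Fin N) × ℝ, 0 < z₀.2 →
        ∫⁻ z in {z : EuclideanSpace ℝ (Fin N) × ℝ | 0 < z.2},
            ENNReal.ofReal (t ^ (-((N : ℝ) + 1) / 2) *
              (min 1 (z.2 / Real.sqrt t)) ^ c *
              Real.exp (-(‖z.1 - z₀.1‖ ^ 2 + (z.2 - z₀.2) ^ 2) / (κ * t))) ≤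
          ENNReal.ofReal C := by
  have hc1 : 0 < c + 1 := by linarith
  refine ⟨(π * κ) ^ ((N : ℝ) / 2) * (1 / (c + 1) + Real.sqrt (π * κ)), by positivity, ?_⟩
  intro t ht z₀ hz₀
  set s := Real.sqrt t with hs_def
  have hs : 0 < s := Real.sqrt_pos.mpr ht
  set b := (κ * t)⁻¹ with hb_def
  have hb : 0 < b := by positivity
  have hπb : π / b = (π * κ) * t := by
    rw [hb_def, division_def, inv_inv]; ring
  have hcoef : t ^ (-((N : ℝ) + 1) / 2) = t ^ (-(N : ℝ) / 2) * s⁻¹ := by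
    rw [hs_def, Real.sqrt_eq_rpow, ← Real.rpow_neg ht.le, ← Real.rpow_add ht]
    congr 1; ring
  have hexp : ∀ A B : ℝ, rexp (-(A + B) / (κ * t)) = rexp (-b * A) * rexp (-b * B) := by
    intro A B
    rw [← Real.exp_add]
    congr 1
    have hkt : κ * t ≠ 0 := by positivity
    rw [hb_def]
    field_simp
    ring
  have hpt : ∀ z : EuclideanSpace ℝ (Fin N) × ℝ,
      ENNReal.ofReal (t ^ (-((N : ℝ) + 1) / 2) * (min 1 (z.2 / s)) ^ c *
        rexp (-(‖z.1 - z₀.1‖ ^ 2 + (z.2 - z₀.2) ^ 2) / (κ * t)))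
      = ENNReal.ofReal (t ^ (-(N : ℝ) / 2) * rexp (-b * ‖z.1 - z₀.1‖ ^ 2)) *
        ENNReal.ofReal (s⁻¹ * (min 1 (z.2 / s)) ^ c * rexp (-b * (z.2 - z₀.2) ^ 2)) := by
    intro z
    rw [← ENNReal.ofReal_mul (by positivity)]
    congr 1
    rw [hexp, hcoef]
    ring
  have hmeasX : Measurable fun x : EuclideanSpace ℝ (Fin N) =>
      ENNReal.ofReal (t ^ (-(N : ℝ) / 2) * rexp (-b * ‖x - z₀.1‖ ^ 2)) := by
    apply Measurable.ennreal_ofReal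
    fun_prop
  have hmeasY : Measurable fun y : ℝ =>
      ENNReal.ofReal (s⁻¹ * (min 1 (y / s)) ^ c * rexp (-b * (y - z₀.2) ^ 2)) := by
    apply Measurable.ennreal_ofReal
    fun_prop
  have hset : {z : EuclideanSpace ℝ (Fin N) × ℝ | 0 < z.2} =
      (Set.univ : Set (EuclideanSpace ℝ (Fin N))) ×ˢ Set.Ioi (0 : ℝ) := by
    ext z; simp
  calc
    ∫⁻ z in {z : EuclideanSpace ℝ (Fin N) × ℝ | 0 < z.2},
        ENNReal.ofReal (t ^ (-((N : ℝ) + 1) / 2) * (min 1 (z.2 / s)) ^ c *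
          rexp (-(‖z.1 - z₀.1‖ ^ 2 + (z.2 - z₀.2) ^ 2) / (κ * t)))
      = (∫⁻ x, ENNReal.ofReal (t ^ (-(N : ℝ) / 2) * rexp (-b * ‖x - z₀.1‖ ^ 2))) *
        ∫⁻ y in Set.Ioi (0 : ℝ),
          ENNReal.ofReal (s⁻¹ * (min 1 (y / s)) ^ c * rexp (-b * (y - z₀.2) ^ 2)) := by
        simp only [hpt]
        rw [hset, Measure.volume_eq_prod, ← Measure.prod_restrict, Measure.restrict_univ]
        exact lintegral_prod_mul hmeasX.aemeasurable hmeasY.aemeasurable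
    _ ≤ ENNReal.ofReal ((π * κ) ^ ((N : ℝ) / 2)) *
        ENNReal.ofReal (1 / (c + 1) + Real.sqrt (π * κ)) := by
        have hX : (∫⁻ x, ENNReal.ofReal (t ^ (-(N : ℝ) / 2) * rexp (-b * ‖x - z₀.1‖ ^ 2)))
            = ENNReal.ofReal ((π * κ) ^ ((N : ℝ) / 2)) := by
          simp_rw [ENNReal.ofReal_mul (Real.rpow_pos_of_pos ht _).le]
          rw [lintegral_const_mul _ (by apply Measurable.ennreal_ofReal; fun_prop),
            lintegral_gaussE N hb z₀.1, ← ENNReal.ofReal_mul (Real.rpow_pos_of_pos ht _).le]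
          congr 1
          rw [hπb, Real.mul_rpow (by positivity) ht.le,
            show -(N : ℝ) / 2 = -((N : ℝ) / 2) by ring, Real.rpow_neg ht.le]
          have ht' : t ^ ((N : ℝ) / 2) ≠ 0 := (Real.rpow_pos_of_pos ht _).ne'
          field_simp
        have hY : (∫⁻ y in Set.Ioi (0 : ℝ),
              ENNReal.ofReal (s⁻¹ * (min 1 (y / s)) ^ c * rexp (-b * (y - z₀.2) ^ 2)))
            ≤ ENNReal.ofReal (1 / (c + 1) + Real.sqrt (π * κ)) := by
          rw [← Set.Ioc_union_Ioi_eq_Ioi hs.le,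
            lintegral_union measurableSet_Ioi (Set.Ioc_disjoint_Ioi le_rfl),
            ENNReal.ofReal_add (by positivity) (Real.sqrt_nonneg _)]
          have hpart1 : (∫⁻ y in Set.Ioc 0 s,
                ENNReal.ofReal (s⁻¹ * (min 1 (y / s)) ^ c * rexp (-b * (y - z₀.2) ^ 2)))
              ≤ ENNReal.ofReal (1 / (c + 1)) := by
            have hmono : ∀ y ∈ Set.Ioc (0 : ℝ) s,
                ENNReal.ofReal (s⁻¹ * (min 1 (y / s)) ^ c * rexp (-b * (y - z₀.2) ^ 2))
                  ≤ ENNReal.ofReal (s⁻¹ * (y / s) ^ c) := by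
              intro y hy
              apply ENNReal.ofReal_le_ofReal
              rw [min_eq_right ((div_le_one hs).mpr hy.2)]
              have h1 : rexp (-b * (y - z₀.2) ^ 2) ≤ 1 := by
                rw [Real.exp_le_one_iff]
                have := sq_nonneg (y - z₀.2)
                nlinarith
              have h2 : 0 ≤ s⁻¹ * (y / s) ^ c :=
                mul_nonneg (inv_nonneg.mpr hs.le)
                  (Real.rpow_nonneg (div_nonneg hy.1.le hs.le) c)
              calc s⁻¹ * (y / s) ^ c * rexp (-b * (y - z₀.2) ^ 2)
                  ≤ s⁻¹ * (y / s) ^ c * 1 := by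
                    exact mul_le_mul_of_nonneg_left h1 h2
                _ = s⁻¹ * (y / s) ^ c := mul_one _
            have hbound_meas : Measurable fun y : ℝ => ENNReal.ofReal (s⁻¹ * (y / s) ^ c) := by
              apply Measurable.ennreal_ofReal
              fun_prop
            calc (∫⁻ y in Set.Ioc 0 s,
                  ENNReal.ofReal (s⁻¹ * (min 1 (y / s)) ^ c * rexp (-b * (y - z₀.2) ^ 2)))
                ≤ ∫⁻ y in Set.Ioc 0 s, ENNReal.ofReal (s⁻¹ * (y / s) ^ c) :=
                  setLIntegral_mono hbound_meas hmono
              _ = ENNReal.ofReal (1 / (c + 1)) := by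
                  have hint : IntegrableOn (fun y : ℝ => y ^ c) (Set.Ioc 0 s) := by
                    have h := intervalIntegral.intervalIntegrable_rpow' (a := 0) (b := s) hc
                    rwa [intervalIntegrable_iff, Set.uIoc_of_le hs.le] at h
                  have heq : ∀ y ∈ Set.Ioc (0 : ℝ) s,
                      s⁻¹ * (y / s) ^ c = (s⁻¹ / s ^ c) * y ^ c := by
                    intro y hy
                    rw [Real.div_rpow hy.1.le hs.le]
                    ring
                  rw [setLIntegral_congr_fun measurableSet_Ioc
                    (fun y hy => by rw [heq y hy])]
                  rw [← ofReal_integral_eq_lintegral_ofReal (hint.const_mul _)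
                    ((ae_restrict_iff' measurableSet_Ioc).mpr
                      (Filter.Eventually.of_forall fun y hy =>
                        mul_nonneg (by positivity) (Real.rpow_nonneg hy.1.le c)))]
                  congr 1
                  rw [MeasureTheory.integral_const_mul]
                  have : ∫ y in Set.Ioc (0:ℝ) s, y ^ c = s ^ (c + 1) / (c + 1) := by
                    rw [← intervalIntegral.integral_of_le hs.le,
                      integral_rpow (Or.inl hc), Real.zero_rpow (by linarith)]
                    ring
                  rw [this]
                  have hsc : s ^ (c + 1) = s ^ c * s := by
                    rw [Real.rpow_add hs, Real.rpow_one]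
                  have h1 : s ^ c ≠ 0 := (Real.rpow_pos_of_pos hs _).ne'
                  have h2 : s ≠ 0 := hs.ne'
                  rw [hsc, show s⁻¹ / s ^ c * (s ^ c * s / (c + 1)) =
                    (s⁻¹ * s) * (s ^ c / s ^ c) * (1 / (c + 1)) by ring,
                    inv_mul_cancel₀ h2, div_self h1]
                  ring
          have hpart2 : (∫⁻ y in Set.Ioi s,
                ENNReal.ofReal (s⁻¹ * (min 1 (y / s)) ^ c * rexp (-b * (y - z₀.2) ^ 2)))
              ≤ ENNReal.ofReal (Real.sqrt (π * κ)) := by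
            have heq : ∀ y ∈ Set.Ioi s,
                ENNReal.ofReal (s⁻¹ * (min 1 (y / s)) ^ c * rexp (-b * (y - z₀.2) ^ 2))
                  = ENNReal.ofReal (s⁻¹ * rexp (-b * (y - z₀.2) ^ 2)) := by
              intro y hy
              rw [min_eq_left ((one_le_div hs).mpr (le_of_lt hy)), Real.one_rpow, mul_one]
            calc (∫⁻ y in Set.Ioi s,
                  ENNReal.ofReal (s⁻¹ * (min 1 (y / s)) ^ c * rexp (-b * (y - z₀.2) ^ 2)))
                = ∫⁻ y in Set.Ioi s, ENNReal.ofReal (s⁻¹ * rexp (-b * (y - z₀.2) ^ 2)) :=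
                  setLIntegral_congr_fun measurableSet_Ioi
                    (fun y hy => heq y hy)
              _ ≤ ∫⁻ y, ENNReal.ofReal (s⁻¹ * rexp (-b * (y - z₀.2) ^ 2)) :=
                  setLIntegral_le_lintegral _ _
              _ = ENNReal.ofReal s⁻¹ * ENNReal.ofReal (Real.sqrt (π / b)) := by
                  simp_rw [ENNReal.ofReal_mul (inv_nonneg.mpr hs.le)]
                  rw [lintegral_const_mul _ (by apply Measurable.ennreal_ofReal; fun_prop),
                    lintegral_gauss1 hb z₀.2]
              _ = ENNReal.ofReal (Real.sqrt (π * κ)) := by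
                  rw [← ENNReal.ofReal_mul (inv_nonneg.mpr hs.le)]
                  congr 1
                  rw [hπb, Real.sqrt_mul (by positivity) t, ← hs_def]
                  field_simp
          exact add_le_add hpart1 hpart2
        rw [hX]
        exact mul_le_mul_right hY _
    _ = ENNReal.ofReal ((π * κ) ^ ((N : ℝ) / 2) * (1 / (c + 1) + Real.sqrt (π * κ))) :=
        (ENNReal.ofReal_mul (by positivity)).symm
end
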